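/- Let G be a group, r ≥ 1, τ an automorphism of G, and θ the automorphism of G^r defined by θ(x_1,…,x_r) = (x_2,…,x_r,τ(x_1)). Fix g = (g_1,…,g_r) ∈ G^r and set ḡ_i = g_1⋯g_i (1 ≤ i ≤ r-1) and ḡ = g_1⋯g_r. Then x = (x_1,…,x_r) ∈ G^r satisfies x^{-1} g θ(x) = g if and only if x_{i+1} = ḡ_i^{-1} x_1 ḡ_i for all 1 ≤ i ≤ r-1 and x_1 ḡ τ(x_1)^{-1} = ḡ. In particular the map x_1 ↦ (x_1, ḡ_1^{-1}x_1ḡ_1, …, ḡ_{r-1}^{-1}x_1ḡ_{r-1}) is a group isomorphism from the τ-twisted centralizer {x_1 ∈ G : x_1 ḡ τ(x_1)^{-1} = ḡ} onto the θ-twisted centralizer {x ∈ G^r : x^{-1} g θ(x) = g}. -/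

import Mathlib

/-- For the twist `θ(x_1,…,x_r) = (x_2,…,x_r,τ(x_1))` of `G^r` and `g ∈ G^r`, with
`c i = g_1⋯g_i` (partial products, `c 0 = 1`) and `ḡ = g_1⋯g_r`:
an element `x ∈ G^r` lies in the `θ`-twisted centralizer of `g` iff
`x_i = c_i⁻¹ x_0 c_i` for all `i` and `x_0` lies in the `τ`-twisted centralizer of `ḡ`;
moreover `x₀ ↦ (c_i⁻¹ x₀ c_i)_i` is multiplicative and a bijection from the `τ`-twisted
centralizer of `ḡ` onto the `θ`-twisted centralizer of `g`. -/
theorem stmt2 (G : Type*) [Group G] (r : ℕ) (hr : 1 ≤ r) (τ : G ≃* G)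
    (θ : (Fin r → G) → (Fin r → G))
    (hθ : ∀ (x : Fin r → G) (i : Fin r),
      θ x i = if h : (i : ℕ) + 1 < r then x ⟨(i : ℕ) + 1, h⟩ else τ (x ⟨0, by omega⟩))
    (g : Fin r → G) (c : Fin r → G)
    (hc : ∀ i : Fin r, c i = ((List.ofFn g).take (i : ℕ)).prod) :
    (∀ x : Fin r → G,
      (∀ i, (x i)⁻¹ * g i * θ x i = g i) ↔
        ((∀ i : Fin r, x i = (c i)⁻¹ * x ⟨0, by omega⟩ * c i) ∧
          x ⟨0, by omega⟩ * (List.ofFn g).prod * (τ (x ⟨0, by omega⟩))⁻¹ = (List.ofFn g).prod))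
    ∧ (∀ a b : G, (fun i => (c i)⁻¹ * (a * b) * c i) =
        (fun i => (c i)⁻¹ * a * c i) * (fun i => (c i)⁻¹ * b * c i))
    ∧ Set.BijOn (fun x₀ : G => fun i => (c i)⁻¹ * x₀ * c i)
        {x₀ : G | x₀ * (List.ofFn g).prod * (τ x₀)⁻¹ = (List.ofFn g).prod}
        {x : Fin r → G | ∀ i, (x i)⁻¹ * g i * θ x i = g i} := by
  have hr0 : 0 < r := hr
  have hr1 : r - 1 < r := by omega
  -- two pure group-theory helper equivalences
  have e1 : ∀ X gg t : G, (X⁻¹ * gg * t = gg) ↔ t = gg⁻¹ * X * gg := by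
    intro X gg t
    constructor
    · intro h
      have h2 := eq_inv_mul_iff_mul_eq.mpr h
      rw [h2]; group
    · intro h; rw [h]; group
  have e2 : ∀ a gg t : G, (a * gg * t⁻¹ = gg) ↔ t = gg⁻¹ * a * gg := by
    intro a gg t
    constructor
    · intro h
      have h2 := eq_inv_mul_iff_mul_eq.mpr h
      have h3 : t = ((a * gg)⁻¹ * gg)⁻¹ := by
        rw [← inv_inv t]; exact congrArg _ h2
      rw [h3]; group
    · intro h; rw [h]; group
  have hlen : (List.ofFn g).length = r := List.length_ofFn
  have hc0 : c ⟨0, hr0⟩ = 1 := by rw [hc]; simp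
  have hcsucc : ∀ (i : ℕ) (h : i + 1 < r),
      c ⟨i + 1, h⟩ = c ⟨i, by omega⟩ * g ⟨i, by omega⟩ := by
    intro i h
    rw [hc, hc]
    rw [List.prod_take_succ _ i (by omega)]
    congr 1
    simp
  have hprod : (List.ofFn g).prod = c ⟨r - 1, hr1⟩ * g ⟨r - 1, hr1⟩ := by
    have htake : (List.ofFn g).take r = List.ofFn g := List.take_of_length_le (by omega)
    have h1 : (List.ofFn g).prod = ((List.ofFn g).take (r - 1 + 1)).prod := by
      rw [show r - 1 + 1 = r by omega, htake]
    rw [h1, List.prod_take_succ _ _ (by omega)]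
    have hc' : c ⟨r - 1, hr1⟩ = ((List.ofFn g).take (r - 1)).prod := hc _
    rw [hc']
    congr 1
    simp
  have main : ∀ x : Fin r → G,
      (∀ i, (x i)⁻¹ * g i * θ x i = g i) ↔
        ((∀ i : Fin r, x i = (c i)⁻¹ * x ⟨0, hr0⟩ * c i) ∧
          x ⟨0, hr0⟩ * (List.ofFn g).prod * (τ (x ⟨0, hr0⟩))⁻¹ = (List.ofFn g).prod) := by
    intro x
    constructor
    · intro h
      have key : ∀ (i : ℕ) (hi : i < r), x ⟨i, hi⟩ = (c ⟨i, hi⟩)⁻¹ * x ⟨0, hr0⟩ * c ⟨i, hi⟩ := by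
        intro i
        induction i with
        | zero => intro hi; rw [hc0]; group
        | succ n ih =>
          intro hi
          have hn : n < r := by omega
          have h1 := h ⟨n, hn⟩
          rw [hθ] at h1
          simp only [dif_pos (show (⟨n, hn⟩ : Fin r).1 + 1 < r from hi)] at h1
          have h2 := eq_inv_mul_iff_mul_eq.mpr h1
          refine h2.trans ?_
          rw [ih hn, hcsucc n hi]
          group
      refine ⟨fun i => key i.1 i.2, ?_⟩
      have hlast := h ⟨r - 1, hr1⟩
      rw [hθ] at hlast
      simp only [dif_neg (show ¬((⟨r - 1, hr1⟩ : Fin r).1 + 1 < r) by simp; omega)] at hlast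
      rw [key (r - 1) hr1] at hlast
      rw [hprod]
      refine (e2 _ _ _).mpr ?_
      have ht := (e1 _ _ _).mp hlast
      rw [show τ (x ⟨0, hr0⟩) = _ from ht]
      group
    · rintro ⟨h1, h2⟩
      intro i
      rw [hθ]
      by_cases hi : (i : ℕ) + 1 < r
      · rw [dif_pos hi]
        rw [h1 ⟨(i : ℕ) + 1, hi⟩, hcsucc i.1 hi, h1 i]
        group
      · rw [dif_neg hi]
        have hi' : i = ⟨r - 1, hr1⟩ := by
          apply Fin.ext
          show (i : ℕ) = r - 1
          have := i.2; omega
        subst hi'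
        rw [hprod] at h2
        have ht := (e2 _ _ _).mp h2
        rw [h1 ⟨r - 1, hr1⟩]
        refine (e1 _ _ _).mpr ?_
        rw [show τ (x ⟨0, hr0⟩) = _ from ht]
        group
  refine ⟨main, ?_, ?_, ?_, ?_⟩
  · intro a b; funext i; simp [mul_assoc]
  · -- MapsTo
    intro x₀ hx₀
    simp only [Set.mem_setOf_eq] at hx₀ ⊢
    rw [main]
    refine ⟨fun i => by simp [hc0], ?_⟩
    simpa [hc0] using hx₀
  · -- InjOn
    intro a ha b hb hab
    have := congrFun hab ⟨0, hr0⟩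
    simpa [hc0] using this
  · -- SurjOn
    intro x hx
    simp only [Set.mem_setOf_eq] at hx
    rw [main] at hx
    refine ⟨x ⟨0, hr0⟩, hx.2, ?_⟩
    funext i
    exact (hx.1 i).symm
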